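/- arXiv:2108.11551 — 6 statements merged into one kernel-verified Lean document; each statement's English description precedes it below -/
import Mathlib

section
/- Fix γ ∈ (0, 1], integers p ≥ 1 and m ≥ 2, vectors x_1, …, x_m ∈ ℝ^p, positive reals D_1, …, D_m, fixed reals y_2, …, y_m, and a compact set Ψ_∞ ⊂ ℝ^p × (0, ∞). Suppose ψ† = (β†, A†) ∈ Ψ_∞ is the unique maximizer over Ψ_∞ of ψ = (β, A) ↦ m^{−1} ∑_{i=2}^m 𝒟_γ(y_i; x_iᵀβ, A + D_i), and that for every y_1 ∈ ℝ there is ψ̂(y_1) = (β̂(y_1), Â(y_1)) ∈ Ψ_∞ maximizing ψ ↦ m^{−1} ∑_{i=1}^m 𝒟_γ(y_i; x_iᵀβ, A + D_i) over Ψ_∞. For a parameter ψ = (β, A) define θ_i^{(γ)}(ψ) = y_i − w_γ(y_i; x_iᵀβ, A + D_i) (D_i/(A + D_i)) (y_i − x_iᵀβ) and s_i^{2(γ)}(ψ) = D_i + w_γ(y_i; x_iᵀβ, A + D_i) (D_i²/(A + D_i)²) {γ(y_i − x_iᵀβ)² − (A + D_i)}. Then as |y_1| → ∞: (i) ψ̂(y_1)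 → ψ†; (ii) θ_1^{(γ)}(ψ̂(y_1)) − y_1 → 0 and s_1^{2(γ)}(ψ̂(y_1)) → D_1; (iii) for every i ≠ 1, θ_i^{(γ)}(ψ̂(y_1)) → θ_i^{(γ)}(ψ†) and s_i^{2(γ)}(ψ̂(y_1)) → s_i^{2(γ)}(ψ†). -/
open Filter Finset Real

/-- Density of `N(μ, σ²)`. -/
noncomputable def gaussPdf (y μ s2 : ℝ) : ℝ :=
  (Real.sqrt (2 * Real.pi * s2))⁻¹ * Real.exp (-(y - μ) ^ 2 / (2 * s2))

/-- γ-divergence weight `w_γ(y; μ, σ²) = φ(y;μ,σ²)^γ (2πσ²)^{γ²/(2(1+γ))}`. -/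
noncomputable def gammaWeight (γ y μ s2 : ℝ) : ℝ :=
  gaussPdf y μ s2 ^ γ * (2 * Real.pi * s2) ^ (γ ^ 2 / (2 * (1 + γ)))

/-- γ-divergence objective `𝒟_γ(y; μ, σ²) = γ⁻¹ w_γ(y; μ, σ²)`. -/
noncomputable def gammaObj (γ y μ s2 : ℝ) : ℝ := γ⁻¹ * gammaWeight γ y μ s2

/-- Robust posterior mean
`θ^{(γ)} = y − w_γ(y; x'β, A+D)·(D/(A+D))·(y − x'β)` for `ψ = (β, A)`. -/
noncomputable def robMean (γ y μ A Di : ℝ) : ℝ :=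
  y - gammaWeight γ y μ (A + Di) * (Di / (A + Di)) * (y - μ)

/-- Robust posterior variance
`s^{2(γ)} = D + w_γ(y; x'β, A+D)·(D²/(A+D)²)·{γ(y−x'β)² − (A+D)}`. -/
noncomputable def robVar (γ y μ A Di : ℝ) : ℝ :=
  Di + gammaWeight γ y μ (A + Di) * (Di ^ 2 / (A + Di) ^ 2)
    * (γ * (y - μ) ^ 2 - (A + Di))

/-! ### Auxiliary lemmas -/

lemma decay_aux {l : Filter ℝ} (hl : Tendsto (fun t : ℝ => |t|) l atTop)
    (c C B : ℝ) (hc : 0 < c) (u f : ℝ → ℝ)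
    (hu : ∀ t, |t| - B ≤ |u t|)
    (hf : ∀ t, |f t| ≤ C * ((u t) ^ 2 + 1) * Real.exp (-(c * (u t) ^ 2))) :
    Tendsto f l (nhds 0) := by
  have h1 : Tendsto (fun t => |u t|) l atTop := by
    refine tendsto_atTop_mono hu ?_
    have := tendsto_atTop_add_const_right l (-B) hl
    exact this.congr fun t => by ring
  have hv : Tendsto (fun t => (u t) ^ 2) l atTop := by
    have := (tendsto_pow_atTop (two_ne_zero)).comp h1
    exact this.congr fun t => by simp [sq_abs]
  have h2 : Tendsto (fun s : ℝ => c * s) atTop atTop :=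
    tendsto_id.const_mul_atTop hc
  have h3 : Tendsto (fun s : ℝ => Real.exp (-(c * s))) atTop (nhds 0) :=
    Real.tendsto_exp_atBot.comp (tendsto_neg_atBot_iff.mpr h2)
  have h4 : Tendsto (fun s : ℝ => s * Real.exp (-(c * s))) atTop (nhds 0) := by
    have h := ((tendsto_pow_mul_exp_neg_atTop_nhds_zero 1).comp h2).const_mul c⁻¹
    rw [mul_zero] at h
    refine h.congr fun s => ?_
    simp only [Function.comp_apply, pow_one]
    rw [← mul_assoc, ← mul_assoc, inv_mul_cancel₀ hc.ne', one_mul]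
  have hg : Tendsto (fun s : ℝ => C * ((s + 1) * Real.exp (-(c * s)))) atTop (nhds 0) := by
    have h := ((h4.add h3).const_mul C)
    rw [add_zero, mul_zero] at h
    refine h.congr fun s => by ring
  refine squeeze_zero_norm (fun t => ?_) (hg.comp hv)
  calc ‖f t‖ ≤ C * ((u t) ^ 2 + 1) * Real.exp (-(c * (u t) ^ 2)) := hf t
    _ = C * (((u t) ^ 2 + 1) * Real.exp (-(c * (u t) ^ 2))) := by ring

lemma gammaWeight_eq (γ y μ s2 : ℝ) (hγ : 0 < γ) (hs2 : 0 < s2) :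
    gammaWeight γ y μ s2 =
      (2 * Real.pi * s2) ^ (-(γ / (2 * (1 + γ)))) *
        Real.exp (-(γ * (y - μ) ^ 2 / (2 * s2))) := by
  have h2pi : (0:ℝ) < 2 * Real.pi * s2 := by positivity
  have h1γ : (1:ℝ) + γ ≠ 0 := by linarith
  unfold gammaWeight gaussPdf
  rw [Real.sqrt_eq_rpow, ← Real.rpow_neg h2pi.le,
    Real.mul_rpow (Real.rpow_nonneg h2pi.le _) (Real.exp_nonneg _),
    ← Real.rpow_mul h2pi.le, ← Real.exp_mul, mul_right_comm,
    ← Real.rpow_add h2pi]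
  congr 1
  · congr 1
    field_simp
    ring
  · congr 1
    ring

lemma gammaWeight_nonneg (γ y μ s2 : ℝ) (hs2 : 0 ≤ s2) : 0 ≤ gammaWeight γ y μ s2 := by
  unfold gammaWeight gaussPdf
  have h1 : (0:ℝ) ≤ (Real.sqrt (2 * Real.pi * s2))⁻¹ * Real.exp (-(y - μ) ^ 2 / (2 * s2)) := by
    positivity
  have h2 : (0:ℝ) ≤ 2 * Real.pi * s2 := by positivity
  exact mul_nonneg (Real.rpow_nonneg h1 _) (Real.rpow_nonneg h2 _)

lemma gammaObj_nonneg (γ y μ s2 : ℝ) (hγ : 0 < γ) (hs2 : 0 ≤ s2) : 0 ≤ gammaObj γ y μ s2 :=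
  mul_nonneg (inv_nonneg.mpr hγ.le) (gammaWeight_nonneg γ y μ s2 hs2)

lemma gammaWeight_le_aux (γ y μ s2 a b : ℝ) (hγ : 0 < γ) (ha : 0 < a)
    (h1 : a ≤ s2) (h2 : s2 ≤ b) :
    gammaWeight γ y μ s2 ≤
      (2 * Real.pi * a) ^ (-(γ / (2 * (1 + γ)))) *
        Real.exp (-(γ / (2 * b) * (y - μ) ^ 2)) := by
  have hs2 : 0 < s2 := ha.trans_le h1
  have hb : 0 < b := hs2.trans_le h2
  rw [gammaWeight_eq γ y μ s2 hγ hs2]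
  apply mul_le_mul
  · apply Real.rpow_le_rpow_of_nonpos (by positivity)
    · nlinarith [Real.pi_pos]
    · have : 0 ≤ γ / (2 * (1 + γ)) := by positivity
      linarith
  · rw [Real.exp_le_exp]
    have key : γ * (y - μ) ^ 2 / (2 * b) ≤ γ * (y - μ) ^ 2 / (2 * s2) := by
      gcongr
    have : γ / (2 * b) * (y - μ) ^ 2 = γ * (y - μ) ^ 2 / (2 * b) := by ring
    linarith [this]
  · positivity
  · positivity

lemma continuousAt_weight {α : Type*} [TopologicalSpace α] (γ y Di : ℝ) (hγ : 0 < γ)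
    (μf Af : α → ℝ) (hμ : Continuous μf) (hA : Continuous Af) (q : α)
    (hq : 0 < Af q + Di) :
    ContinuousAt (fun ψ => gammaWeight γ y (μf ψ) (Af ψ + Di)) q := by
  have hopen : IsOpen {ψ : α | 0 < Af ψ + Di} :=
    isOpen_lt continuous_const (hA.add continuous_const)
  have hmem : {ψ : α | 0 < Af ψ + Di} ∈ nhds q := hopen.mem_nhds hq
  have hca : ContinuousAt (fun ψ =>
      (2 * Real.pi * (Af ψ + Di)) ^ (-(γ / (2 * (1 + γ)))) *
        Real.exp (-(γ * (y - μf ψ) ^ 2 / (2 * (Af ψ + Di))))) q := by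
    apply ContinuousAt.mul
    · apply ContinuousAt.rpow_const
      · exact (continuous_const.mul (hA.add continuous_const)).continuousAt
      · left
        positivity
    · apply Real.continuous_exp.continuousAt.comp
      apply ContinuousAt.neg
      apply ContinuousAt.div
      · exact (continuous_const.mul ((continuous_const.sub hμ).pow 2)).continuousAt
      · exact (continuous_const.mul (hA.add continuous_const)).continuousAt
      · positivity
  refine hca.congr ?_
  filter_upwards [hmem] with ψ hψ
  exact (gammaWeight_eq γ y (μf ψ) (Af ψ + Di) hγ hψ).symm

set_option maxHeartbeats 2000000 in
/-- Proposition 2: tail robustness of the γ-divergence empirical Bayes quantities.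
As `y₁ → ±∞`, the robust estimator `ψ̂(y₁)` converges to the maximizer `ψ†` of the
objective based on the non-outlying observations; the outlying area's robust
posterior mean/variance reduce to the direct estimator `y₁` and sampling variance
`D₁`; and the non-outlying areas' quantities converge to those evaluated at `ψ†`. -/
theorem robust_eb_tail_robustness
    (γ : ℝ) (hγ0 : 0 < γ) (hγ1 : γ ≤ 1)
    (p m : ℕ) (hp : 0 < p) (hm : 2 ≤ m)
    (x : Fin m → Fin p → ℝ) (D : Fin m → ℝ) (hD : ∀ i, 0 < D i)
    (y0 : Fin m → ℝ)
    (Y : ℝ → Fin m → ℝ)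
    (hY1 : ∀ t : ℝ, Y t ⟨0, by omega⟩ = t)
    (hYi : ∀ t : ℝ, ∀ i : Fin m, i ≠ ⟨0, by omega⟩ → Y t i = y0 i)
    (Ψ : Set ((Fin p → ℝ) × ℝ)) (hΨc : IsCompact Ψ)
    (hΨpos : ∀ ψ ∈ Ψ, 0 < ψ.2)
    (ψdag : (Fin p → ℝ) × ℝ) (hψdagΨ : ψdag ∈ Ψ)
    (hdagmax : ∀ ψ ∈ Ψ, ψ ≠ ψdag →
      (m : ℝ)⁻¹ * ∑ i ∈ univ.erase (⟨0, by omega⟩ : Fin m),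
          gammaObj γ (y0 i) (∑ k, x i k * ψ.1 k) (ψ.2 + D i)
        < (m : ℝ)⁻¹ * ∑ i ∈ univ.erase (⟨0, by omega⟩ : Fin m),
          gammaObj γ (y0 i) (∑ k, x i k * ψdag.1 k) (ψdag.2 + D i))
    (ψhat : ℝ → (Fin p → ℝ) × ℝ) (hψhatΨ : ∀ t, ψhat t ∈ Ψ)
    (hhatmax : ∀ t : ℝ, ∀ ψ ∈ Ψ,
      (m : ℝ)⁻¹ * ∑ i, gammaObj γ (Y t i) (∑ k, x i k * ψ.1 k) (ψ.2 + D i)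
        ≤ (m : ℝ)⁻¹ * ∑ i, gammaObj γ (Y t i)
            (∑ k, x i k * (ψhat t).1 k) ((ψhat t).2 + D i)) :
    -- (i) convergence of the estimator
    (Tendsto ψhat atTop (nhds ψdag) ∧ Tendsto ψhat atBot (nhds ψdag)) ∧
    -- (ii) the outlying area: robust mean tracks y₁, robust variance tends to D₁
    ((Tendsto (fun t => robMean γ (Y t ⟨0, by omega⟩)
          (∑ k, x ⟨0, by omega⟩ k * (ψhat t).1 k) (ψhat t).2 (D ⟨0, by omega⟩) - t)
        atTop (nhds 0) ∧
      Tendsto (fun t => robMean γ (Y t ⟨0, by omega⟩)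
          (∑ k, x ⟨0, by omega⟩ k * (ψhat t).1 k) (ψhat t).2 (D ⟨0, by omega⟩) - t)
        atBot (nhds 0)) ∧
     (Tendsto (fun t => robVar γ (Y t ⟨0, by omega⟩)
          (∑ k, x ⟨0, by omega⟩ k * (ψhat t).1 k) (ψhat t).2 (D ⟨0, by omega⟩))
        atTop (nhds (D ⟨0, by omega⟩)) ∧
      Tendsto (fun t => robVar γ (Y t ⟨0, by omega⟩)
          (∑ k, x ⟨0, by omega⟩ k * (ψhat t).1 k) (ψhat t).2 (D ⟨0, by omega⟩))
        atBot (nhds (D ⟨0, by omega⟩)))) ∧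
    -- (iii) non-outlying areas converge to the quantities evaluated at ψ†
    ∀ i : Fin m, i ≠ ⟨0, by omega⟩ →
      ((Tendsto (fun t => robMean γ (Y t i) (∑ k, x i k * (ψhat t).1 k)
            (ψhat t).2 (D i))
          atTop (nhds (robMean γ (y0 i) (∑ k, x i k * ψdag.1 k) ψdag.2 (D i))) ∧
        Tendsto (fun t => robMean γ (Y t i) (∑ k, x i k * (ψhat t).1 k)
            (ψhat t).2 (D i))
          atBot (nhds (robMean γ (y0 i) (∑ k, x i k * ψdag.1 k) ψdag.2 (D i)))) ∧
       (Tendsto (fun t => robVar γ (Y t i) (∑ k, x i k * (ψhat t).1 k)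
            (ψhat t).2 (D i))
          atTop (nhds (robVar γ (y0 i) (∑ k, x i k * ψdag.1 k) ψdag.2 (D i))) ∧
        Tendsto (fun t => robVar γ (Y t i) (∑ k, x i k * (ψhat t).1 k)
            (ψhat t).2 (D i))
          atBot (nhds (robVar γ (y0 i) (∑ k, x i k * ψdag.1 k) ψdag.2 (D i))))) := by
  have hm0 : 0 < m := by omega
  let i0 : Fin m := ⟨0, hm0⟩
  -- continuity of the linear predictors
  have hμc : ∀ i : Fin m, Continuous (fun ψ : (Fin p → ℝ) × ℝ => ∑ k, x i k * ψ.1 k) :=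
    fun i => continuous_finset_sum _ fun k _ =>
      continuous_const.mul ((continuous_apply k).comp continuous_fst)
  have hne : Ψ.Nonempty := ⟨ψdag, hψdagΨ⟩
  -- compactness bounds
  obtain ⟨ψa, hψaΨ, hamin⟩ := hΨc.exists_isMinOn hne continuous_snd.continuousOn
  obtain ⟨ψb, hψbΨ, hbmax⟩ := hΨc.exists_isMaxOn hne continuous_snd.continuousOn
  set a := ψa.2 with hadef
  set b := ψb.2 with hbdef
  have ha : 0 < a := hΨpos _ hψaΨ
  have hale : ∀ ψ ∈ Ψ, a ≤ ψ.2 := fun ψ hψ => isMinOn_iff.mp hamin ψ hψ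
  have hble : ∀ ψ ∈ Ψ, ψ.2 ≤ b := fun ψ hψ => isMaxOn_iff.mp hbmax ψ hψ
  have hab : a ≤ b := (hale _ hψbΨ)
  obtain ⟨ψB, hψBΨ, hBmax⟩ := hΨc.exists_isMaxOn hne
    ((continuous_abs.comp (hμc i0)).continuousOn)
  set B := |∑ k, x i0 k * ψB.1 k| with hBdef
  have hB : ∀ ψ ∈ Ψ, |∑ k, x i0 k * ψ.1 k| ≤ B := fun ψ hψ => isMaxOn_iff.mp hBmax ψ hψ
  set D0 := D i0 with hD0def
  have hD0 : 0 < D0 := hD i0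
  set c := γ / (2 * (b + D0)) with hcdef
  have hbD : 0 < b + D0 := by linarith
  have haD : 0 < a + D0 := by linarith
  have hc : 0 < c := by rw [hcdef]; positivity
  set K := (2 * Real.pi * (a + D0)) ^ (-(γ / (2 * (1 + γ)))) with hKdef
  have hK : 0 ≤ K := Real.rpow_nonneg (by positivity) _
  -- uniform bound on the weight of the outlying observation
  have hw : ∀ (t : ℝ) (ψ : (Fin p → ℝ) × ℝ), ψ ∈ Ψ →
      gammaWeight γ t (∑ k, x i0 k * ψ.1 k) (ψ.2 + D0) ≤
        K * Real.exp (-(c * (t - ∑ k, x i0 k * ψ.1 k) ^ 2)) := by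
    intro t ψ hψ
    have h := gammaWeight_le_aux γ t (∑ k, x i0 k * ψ.1 k) (ψ.2 + D0) (a + D0) (b + D0)
      hγ0 haD (by linarith [hale ψ hψ]) (by linarith [hble ψ hψ])
    refine h.trans_eq ?_
    rw [hKdef, hcdef]
  -- uniform bound on the objective of the outlying observation
  have hobj : ∀ (t : ℝ) (ψ : (Fin p → ℝ) × ℝ), ψ ∈ Ψ → B ≤ |t| →
      gammaObj γ t (∑ k, x i0 k * ψ.1 k) (ψ.2 + D0) ≤
        γ⁻¹ * (K * Real.exp (-(c * (|t| - B) ^ 2))) := by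
    intro t ψ hψ hBt
    have h0 : (0:ℝ) ≤ γ⁻¹ := inv_nonneg.mpr hγ0.le
    refine mul_le_mul_of_nonneg_left ?_ h0
    refine (hw t ψ hψ).trans (mul_le_mul_of_nonneg_left ?_ hK)
    rw [Real.exp_le_exp, neg_le_neg_iff]
    refine mul_le_mul_of_nonneg_left ?_ hc.le
    have h1 : |t| - B ≤ |t - ∑ k, x i0 k * ψ.1 k| := by
      have h2 := abs_sub_abs_le_abs_sub t (∑ k, x i0 k * ψ.1 k)
      have h3 := hB ψ hψ
      linarith
    calc (|t| - B) ^ 2 ≤ |t - ∑ k, x i0 k * ψ.1 k| ^ 2 :=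
          pow_le_pow_left₀ (sub_nonneg.mpr hBt) h1 2
      _ = (t - ∑ k, x i0 k * ψ.1 k) ^ 2 := sq_abs _
  -- the vanishing envelope
  set E : ℝ → ℝ := fun t => γ⁻¹ * (K * Real.exp (-(c * (|t| - B) ^ 2))) with hEdef
  have hEnn : ∀ t, 0 ≤ E t := fun t => by
    rw [hEdef]
    have := Real.exp_nonneg (-(c * (|t| - B) ^ 2))
    positivity
  have hEl : ∀ l : Filter ℝ, Tendsto (fun t : ℝ => |t|) l atTop → Tendsto E l (nhds 0) := by
    intro l hl
    refine decay_aux hl c (γ⁻¹ * K) B hc (fun t => |t| - B) E (fun t => le_abs_self _) ?_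
    intro t
    rw [abs_of_nonneg (hEnn t), hEdef]
    have h1 : (0:ℝ) ≤ γ⁻¹ * K := by positivity
    have h2 : (0:ℝ) < Real.exp (-(c * (|t| - B) ^ 2)) := Real.exp_pos _
    nlinarith [mul_nonneg (mul_nonneg h1 h2.le) (sq_nonneg (|t| - B))]
  -- Part (i), generic in the filter
  have key1 : ∀ l : Filter ℝ, Tendsto (fun t : ℝ => |t|) l atTop →
      Tendsto ψhat l (nhds ψdag) := by
    intro l hl
    set G : (Fin p → ℝ) × ℝ → ℝ := fun ψ =>
      (m : ℝ)⁻¹ * ∑ i ∈ univ.erase i0,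
        gammaObj γ (y0 i) (∑ k, x i k * ψ.1 k) (ψ.2 + D i) with hGdef
    have hGc : ContinuousOn G Ψ := by
      intro ψ hψ
      apply ContinuousAt.continuousWithinAt
      apply ContinuousAt.mul continuousAt_const
      apply tendsto_finset_sum
      intro i _
      have hpos : 0 < ψ.2 + D i := by linarith [hΨpos ψ hψ, hD i]
      exact (continuousAt_weight γ (y0 i) (D i) hγ0 _ _ (hμc i) continuous_snd ψ hpos).const_mul γ⁻¹
    rw [Metric.tendsto_nhds]
    intro ε hε
    by_cases hK' : (Ψ \ Metric.ball ψdag ε).Nonempty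
    · obtain ⟨ψs, hψs, hψsmax⟩ := (hΨc.diff Metric.isOpen_ball).exists_isMaxOn hK'
        (hGc.mono Set.diff_subset)
      have hψsΨ : ψs ∈ Ψ := hψs.1
      have hψsne : ψs ≠ ψdag := by
        intro h
        exact hψs.2 (h ▸ Metric.mem_ball_self hε)
      have hδ : G ψs < G ψdag := hdagmax ψs hψsΨ hψsne
      filter_upwards [hl.eventually_ge_atTop B,
        (hEl l hl).eventually (gt_mem_nhds (show (0:ℝ) < G ψdag - G ψs by linarith))]
        with t hBt hEt
      by_contra hdist
      push_neg at hdist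
      have hmemdiff : ψhat t ∈ Ψ \ Metric.ball ψdag ε :=
        ⟨hψhatΨ t, fun hball => absurd (Metric.mem_ball.mp hball) (not_lt.mpr hdist)⟩
      have hle : G (ψhat t) ≤ G ψs := isMaxOn_iff.mp hψsmax _ hmemdiff
      have hdec : ∀ ψ : (Fin p → ℝ) × ℝ,
          (m : ℝ)⁻¹ * ∑ i, gammaObj γ (Y t i) (∑ k, x i k * ψ.1 k) (ψ.2 + D i)
            = G ψ + (m : ℝ)⁻¹ * gammaObj γ t (∑ k, x i0 k * ψ.1 k) (ψ.2 + D i0) := by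
        intro ψ
        rw [← Finset.sum_erase_add univ _ (mem_univ i0), mul_add, hY1]
        rw [hGdef]
        congr 2
        refine Finset.sum_congr rfl fun j hj => ?_
        rw [hYi t j (Finset.ne_of_mem_erase hj)]
      have hQ := hhatmax t ψdag hψdagΨ
      rw [hdec ψdag, hdec (ψhat t)] at hQ
      have h1 : 0 ≤ gammaObj γ t (∑ k, x i0 k * ψdag.1 k) (ψdag.2 + D i0) :=
        gammaObj_nonneg _ _ _ _ hγ0 (by linarith [hΨpos _ hψdagΨ, hD i0])
      have h2 : gammaObj γ t (∑ k, x i0 k * (ψhat t).1 k) ((ψhat t).2 + D i0) ≤ E t :=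
        hobj t (ψhat t) (hψhatΨ t) hBt
      have hminv1 : (m : ℝ)⁻¹ ≤ 1 := by
        rw [inv_le_one_iff₀]
        right
        exact_mod_cast Nat.one_le_iff_ne_zero.mpr (by omega)
      have hminv0 : (0:ℝ) < (m : ℝ)⁻¹ := by
        have : (0:ℝ) < m := by exact_mod_cast hm0
        positivity
      have h3 : (m : ℝ)⁻¹ * gammaObj γ t (∑ k, x i0 k * (ψhat t).1 k) ((ψhat t).2 + D i0)
          ≤ E t := by
        calc (m : ℝ)⁻¹ * gammaObj γ t (∑ k, x i0 k * (ψhat t).1 k) ((ψhat t).2 + D i0)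
            ≤ (m : ℝ)⁻¹ * E t := by
              apply mul_le_mul_of_nonneg_left h2 hminv0.le
          _ ≤ 1 * E t := mul_le_mul_of_nonneg_right hminv1 (hEnn t)
          _ = E t := one_mul _
      have h4 : 0 ≤ (m : ℝ)⁻¹ * gammaObj γ t (∑ k, x i0 k * ψdag.1 k) (ψdag.2 + D i0) :=
        mul_nonneg hminv0.le h1
      linarith
    · filter_upwards with t
      by_contra hdist
      push_neg at hdist
      exact hK' ⟨ψhat t, hψhatΨ t, fun hball =>
        absurd (Metric.mem_ball.mp hball) (not_lt.mpr hdist)⟩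
  -- Part (ii) mean, generic in the filter
  have key2m : ∀ l : Filter ℝ, Tendsto (fun t : ℝ => |t|) l atTop →
      Tendsto (fun t => robMean γ (Y t i0)
        (∑ k, x i0 k * (ψhat t).1 k) (ψhat t).2 D0 - t) l (nhds 0) := by
    intro l hl
    refine decay_aux hl c K B hc (fun t => t - ∑ k, x i0 k * (ψhat t).1 k) _ ?_ ?_
    · intro t
      have h2 := abs_sub_abs_le_abs_sub t (∑ k, x i0 k * (ψhat t).1 k)
      have h3 := hB (ψhat t) (hψhatΨ t)
      linarith
    · intro t
      have hψ := hψhatΨ t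
      have hA : 0 < (ψhat t).2 := hΨpos _ hψ
      have hs2 : 0 < (ψhat t).2 + D0 := by linarith
      have hwle := hw t (ψhat t) hψ
      have hwnn : 0 ≤ gammaWeight γ t (∑ k, x i0 k * (ψhat t).1 k) ((ψhat t).2 + D0) :=
        gammaWeight_nonneg _ _ _ _ hs2.le
      have hds : D0 / ((ψhat t).2 + D0) ≤ 1 := by
        rw [div_le_one hs2]
        linarith
      have hdsnn : 0 ≤ D0 / ((ψhat t).2 + D0) := by positivity
      rw [hY1]
      unfold robMean
      set u := t - ∑ k, x i0 k * (ψhat t).1 k with hudef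
      set w := gammaWeight γ t (∑ k, x i0 k * (ψhat t).1 k) ((ψhat t).2 + D0) with hwdef
      have heq : t - w * (D0 / ((ψhat t).2 + D0)) * u - t
          = -(w * (D0 / ((ψhat t).2 + D0)) * u) := by ring
      rw [heq, abs_neg, abs_mul, abs_mul, abs_of_nonneg hwnn, abs_of_nonneg hdsnn]
      have habsu : |u| ≤ u ^ 2 + 1 := by nlinarith [abs_nonneg u, sq_abs u]
      calc w * (D0 / ((ψhat t).2 + D0)) * |u|
          ≤ (K * Real.exp (-(c * u ^ 2))) * 1 * (u ^ 2 + 1) := by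
            apply mul_le_mul
            · exact mul_le_mul hwle hds hdsnn (by positivity)
            · exact habsu
            · exact abs_nonneg u
            · positivity
        _ = K * (u ^ 2 + 1) * Real.exp (-(c * u ^ 2)) := by ring
  -- Part (ii) variance, generic in the filter
  have key2v : ∀ l : Filter ℝ, Tendsto (fun t : ℝ => |t|) l atTop →
      Tendsto (fun t => robVar γ (Y t i0)
        (∑ k, x i0 k * (ψhat t).1 k) (ψhat t).2 D0) l (nhds D0) := by
    intro l hl
    have h : Tendsto (fun t => robVar γ (Y t i0)
        (∑ k, x i0 k * (ψhat t).1 k) (ψhat t).2 D0 - D0) l (nhds 0) := by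
      refine decay_aux hl c (K * (1 + (b + D0))) B hc
        (fun t => t - ∑ k, x i0 k * (ψhat t).1 k) _ ?_ ?_
      · intro t
        have h2 := abs_sub_abs_le_abs_sub t (∑ k, x i0 k * (ψhat t).1 k)
        have h3 := hB (ψhat t) (hψhatΨ t)
        linarith
      · intro t
        have hψ := hψhatΨ t
        have hA : 0 < (ψhat t).2 := hΨpos _ hψ
        have hs2 : 0 < (ψhat t).2 + D0 := by linarith
        have hs2b : (ψhat t).2 + D0 ≤ b + D0 := by linarith [hble _ hψ]
        have hwle := hw t (ψhat t) hψ
        have hwnn : 0 ≤ gammaWeight γ t (∑ k, x i0 k * (ψhat t).1 k) ((ψhat t).2 + D0) :=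
          gammaWeight_nonneg _ _ _ _ hs2.le
        have hds : D0 ^ 2 / ((ψhat t).2 + D0) ^ 2 ≤ 1 := by
          rw [div_le_one (by positivity)]
          nlinarith
        have hdsnn : 0 ≤ D0 ^ 2 / ((ψhat t).2 + D0) ^ 2 := by positivity
        rw [hY1]
        unfold robVar
        set u := t - ∑ k, x i0 k * (ψhat t).1 k with hudef
        set w := gammaWeight γ t (∑ k, x i0 k * (ψhat t).1 k) ((ψhat t).2 + D0) with hwdef
        have heq : D0 + w * (D0 ^ 2 / ((ψhat t).2 + D0) ^ 2)
            * (γ * u ^ 2 - ((ψhat t).2 + D0)) - D0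
            = w * (D0 ^ 2 / ((ψhat t).2 + D0) ^ 2) * (γ * u ^ 2 - ((ψhat t).2 + D0)) := by
          ring
        rw [heq, abs_mul, abs_mul, abs_of_nonneg hwnn, abs_of_nonneg hdsnn]
        have habs2 : |γ * u ^ 2 - ((ψhat t).2 + D0)| ≤ (1 + (b + D0)) * (u ^ 2 + 1) := by
          rw [abs_le]
          constructor
          · nlinarith [sq_nonneg u]
          · nlinarith [sq_nonneg u]
        calc w * (D0 ^ 2 / ((ψhat t).2 + D0) ^ 2) * |γ * u ^ 2 - ((ψhat t).2 + D0)|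
            ≤ (K * Real.exp (-(c * u ^ 2))) * 1 * ((1 + (b + D0)) * (u ^ 2 + 1)) := by
              apply mul_le_mul
              · exact mul_le_mul hwle hds hdsnn (by positivity)
              · exact habs2
              · exact abs_nonneg _
              · positivity
          _ = K * (1 + (b + D0)) * (u ^ 2 + 1) * Real.exp (-(c * u ^ 2)) := by ring
    have h2 := h.add_const D0
    simpa using h2
  -- Part (iii), generic in the filter
  have key3 : ∀ i : Fin m, i ≠ i0 → ∀ l : Filter ℝ, Tendsto (fun t : ℝ => |t|) l atTop →
      (Tendsto (fun t => robMean γ (Y t i) (∑ k, x i k * (ψhat t).1 k)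
          (ψhat t).2 (D i)) l
        (nhds (robMean γ (y0 i) (∑ k, x i k * ψdag.1 k) ψdag.2 (D i))) ∧
      Tendsto (fun t => robVar γ (Y t i) (∑ k, x i k * (ψhat t).1 k)
          (ψhat t).2 (D i)) l
        (nhds (robVar γ (y0 i) (∑ k, x i k * ψdag.1 k) ψdag.2 (D i)))) := by
    intro i hi l hl
    have hsd : 0 < ψdag.2 + D i := by linarith [hΨpos _ hψdagΨ, hD i]
    have hwc : ContinuousAt (fun ψ : (Fin p → ℝ) × ℝ =>
        gammaWeight γ (y0 i) (∑ k, x i k * ψ.1 k) (ψ.2 + D i)) ψdag :=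
      continuousAt_weight γ (y0 i) (D i) hγ0 _ _ (hμc i) continuous_snd ψdag hsd
    have hsub : ContinuousAt (fun ψ : (Fin p → ℝ) × ℝ =>
        y0 i - ∑ k, x i k * ψ.1 k) ψdag := (continuous_const.sub (hμc i)).continuousAt
    have hsnd : ContinuousAt (fun ψ : (Fin p → ℝ) × ℝ => ψ.2 + D i) ψdag :=
      (continuous_snd.add continuous_const).continuousAt
    have hmc : ContinuousAt (fun ψ : (Fin p → ℝ) × ℝ =>
        robMean γ (y0 i) (∑ k, x i k * ψ.1 k) ψ.2 (D i)) ψdag := by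
      unfold robMean
      exact continuousAt_const.sub
        (((hwc.mul (continuousAt_const.div hsnd hsd.ne')).mul hsub))
    have hvc : ContinuousAt (fun ψ : (Fin p → ℝ) × ℝ =>
        robVar γ (y0 i) (∑ k, x i k * ψ.1 k) ψ.2 (D i)) ψdag := by
      unfold robVar
      apply continuousAt_const.add
      apply ContinuousAt.mul
      · exact hwc.mul (continuousAt_const.div (hsnd.pow 2) (pow_ne_zero 2 hsd.ne'))
      · exact ((continuousAt_const.mul (hsub.pow 2)).sub hsnd)
    have hψt := key1 l hl
    constructor
    · refine (hmc.tendsto.comp hψt).congr fun t => ?_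
      simp only [Function.comp]
      rw [hYi t i hi]
    · refine (hvc.tendsto.comp hψt).congr fun t => ?_
      simp only [Function.comp]
      rw [hYi t i hi]
  refine ⟨⟨key1 atTop tendsto_abs_atTop_atTop, key1 atBot tendsto_abs_atBot_atTop⟩,
    ⟨⟨key2m atTop tendsto_abs_atTop_atTop, key2m atBot tendsto_abs_atBot_atTop⟩,
      ⟨key2v atTop tendsto_abs_atTop_atTop, key2v atBot tendsto_abs_atBot_atTop⟩⟩,
    fun i hi => ⟨⟨(key3 i hi atTop tendsto_abs_atTop_atTop).1,
        (key3 i hi atBot tendsto_abs_atBot_atTop).1⟩,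
      ⟨(key3 i hi atTop tendsto_abs_atTop_atTop).2,
        (key3 i hi atBot tendsto_abs_atBot_atTop).2⟩⟩⟩
end

section
/- Let μ ∈ ℝ, σ² > 0, γ > 0 and D ∈ ℝ. Then the function y ↦ 𝒟_γ(y; μ, σ²) = γ^{−1} φ(y; μ, σ²)^γ (2πσ²)^{γ²/(2(1+γ))} is twice differentiable in y and for every y ∈ ℝ, D + D² · (d²/dy²) 𝒟_γ(y; μ, σ²) = D + w_γ(y; μ, σ²) · (D²/σ⁴) · {γ (y − μ)² − σ²}, where w_γ(y; μ, σ²) = φ(y; μ, σ²)^γ (2πσ²)^{γ²/(2(1+γ))}. -/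
open Real

/-- Second Tweedie-type identity:
`D + D²·(d²/dy²)𝒟_γ(y;μ,σ²) = D + w_γ(y;μ,σ²)(D²/σ⁴){γ(y−μ)² − σ²}`. -/
theorem tweedie_second (μ s2 γ D : ℝ) (hs2 : 0 < s2) (hγ : 0 < γ) :
    (∀ y, DifferentiableAt ℝ (fun z => gammaObj γ z μ s2) y) ∧
    (∀ y, DifferentiableAt ℝ (deriv (fun z => gammaObj γ z μ s2)) y) ∧
    ∀ y, D + D ^ 2 * deriv (deriv (fun z => gammaObj γ z μ s2)) y
        = D + gammaWeight γ y μ s2 * (D ^ 2 / s2 ^ 2) * (γ * (y - μ) ^ 2 - s2) := by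
  have h2pi : (0:ℝ) < 2 * Real.pi * s2 := by positivity
  set K : ℝ := ((Real.sqrt (2 * Real.pi * s2))⁻¹) ^ γ *
      (2 * Real.pi * s2) ^ (γ ^ 2 / (2 * (1 + γ))) with hK
  set c : ℝ := -γ / (2 * s2) with hc
  have hw : ∀ z, gammaWeight γ z μ s2 = K * Real.exp (c * (z - μ) ^ 2) := by
    intro z
    have hb : (0:ℝ) ≤ (Real.sqrt (2 * Real.pi * s2))⁻¹ := by positivity
    rw [gammaWeight, gaussPdf, Real.mul_rpow hb (Real.exp_nonneg _),
      ← Real.exp_log (Real.exp_pos (-(z - μ) ^ 2 / (2 * s2))), Real.log_exp,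
      ← Real.exp_mul]
    rw [hK, hc]
    ring_nf
  set F : ℝ → ℝ := fun z => γ⁻¹ * K * Real.exp (c * (z - μ) ^ 2) with hF
  set F' : ℝ → ℝ := fun z => F z * (2 * c * (z - μ)) with hF'
  have hobj : (fun z => gammaObj γ z μ s2) = F := by
    funext z
    rw [gammaObj, hw z, hF]
    ring
  have hdF : ∀ z, HasDerivAt F (F' z) z := by
    intro z
    have h1 : HasDerivAt (fun z : ℝ => c * (z - μ) ^ 2) (2 * c * (z - μ)) z := by
      have := (((hasDerivAt_id z).sub_const μ).pow 2).const_mul c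
      refine this.congr_deriv ?_
      simp only [id_eq]
      ring
    have := (h1.exp).const_mul (γ⁻¹ * K)
    refine this.congr_deriv ?_
    simp [hF', hF]
    ring
  have hdF' : ∀ z, HasDerivAt F' (F z * ((2 * c * (z - μ)) ^ 2 + 2 * c)) z := by
    intro z
    have h2 : HasDerivAt (fun z : ℝ => 2 * c * (z - μ)) (2 * c) z := by
      have := ((hasDerivAt_id z).sub_const μ).const_mul (2 * c)
      refine this.congr_deriv ?_
      ring
    have := (hdF z).mul h2
    refine this.congr_deriv ?_
    simp only [hF']
    ring
  have hderivF : deriv F = F' := funext fun z => (hdF z).deriv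
  refine ⟨?_, ?_, ?_⟩
  · intro y; rw [hobj]; exact (hdF y).differentiableAt
  · intro y; rw [hobj, hderivF]; exact (hdF' y).differentiableAt
  · intro y
    rw [hobj, hderivF, (hdF' y).deriv]
    have hwy := hw y
    have hs : s2 ≠ 0 := ne_of_gt hs2
    have hg : γ ≠ 0 := ne_of_gt hγ
    rw [hwy, hF]
    rw [hc]
    field_simp
    ring
end

section
/- Let μ ∈ ℝ, σ² > 0, D ∈ ℝ and γ ≥ 0. Then ∫_ℝ φ(t; μ, σ²) · w_γ(t; μ, σ²) · (D²/σ⁴) · {γ (t − μ)² − σ²} dt = − (D²/σ²) · (2πσ²)^{−γ/(2(1+γ))} · (1+γ)^{−3/2}, where w_γ(t; μ, σ²) = φ(t; μ, σ²)^γ (2πσ²)^{γ²/(2(1+γ))}. -/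
open Real MeasureTheory

lemma integral_sq_mul_gauss {b : ℝ} (hb : 0 < b) :
    ∫ x : ℝ, x ^ 2 * Real.exp (-b * x ^ 2) = Real.sqrt (π / b) / (2 * b) := by
  have hint2 : Integrable (fun x : ℝ => x ^ 2 * Real.exp (-b * x ^ 2)) := by
    have := integrable_rpow_mul_exp_neg_mul_sq hb (s := 2) (by norm_num)
    simpa [Real.rpow_natCast] using this
  have hint0 : Integrable (fun x : ℝ => Real.exp (-b * x ^ 2)) :=
    integrable_exp_neg_mul_sq hb
  have hintf : Integrable (fun x : ℝ => -x / (2 * b) * Real.exp (-b * x ^ 2)) := by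
    have := integrable_mul_exp_neg_mul_sq hb
    have : Integrable (fun x : ℝ => (-(2 * b)⁻¹) * (x * Real.exp (-b * x ^ 2))) :=
      this.const_mul _
    refine this.congr ?_
    filter_upwards with x
    ring_nf
  have hderiv : ∀ x : ℝ, HasDerivAt (fun x : ℝ => -x / (2 * b) * Real.exp (-b * x ^ 2))
      (x ^ 2 * Real.exp (-b * x ^ 2) - (2 * b)⁻¹ * Real.exp (-b * x ^ 2)) x := by
    intro x
    have h1 : HasDerivAt (fun x : ℝ => -x / (2 * b)) (-(2 * b)⁻¹) x := by
      simpa [neg_div] using ((hasDerivAt_id x).neg.div_const (2 * b))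
    have h2 : HasDerivAt (fun x : ℝ => Real.exp (-b * x ^ 2)) ((-b * (2 * x)) * Real.exp (-b * x ^ 2)) x := by
      have : HasDerivAt (fun x : ℝ => -b * x ^ 2) (-b * (2 * x)) x := by
        simpa using ((hasDerivAt_pow 2 x).const_mul (-b))
      simpa [mul_comm] using this.exp
    have := h1.mul h2
    refine this.congr_deriv ?_
    linear_combination (x ^ 2 * Real.exp (-b * x ^ 2)) * mul_inv_cancel₀ (by positivity : (2 * b) ≠ 0)
  have hzero : ∫ x : ℝ, (x ^ 2 * Real.exp (-b * x ^ 2) - (2 * b)⁻¹ * Real.exp (-b * x ^ 2)) = 0 := by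
    apply integral_eq_zero_of_hasDerivAt_of_integrable hderiv
    · exact hint2.sub (hint0.const_mul _)
    · exact hintf
  have := integral_sub hint2 (hint0.const_mul ((2 * b)⁻¹))
  rw [this] at hzero
  rw [sub_eq_zero] at hzero
  rw [hzero, MeasureTheory.integral_const_mul, integral_gaussian]
  field_simp


/-- Closed form of the population selection criterion under correct specification:
`∫ φ(t;μ,σ²) w_γ(t;μ,σ²) (D²/σ⁴){γ(t−μ)² − σ²} dt
  = −(D²/σ²)(2πσ²)^{−γ/(2(1+γ))}(1+γ)^{−3/2}`. -/
theorem population_criterion_closed_form (μ s2 D γ : ℝ) (hs2 : 0 < s2) (hγ : 0 ≤ γ) :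
    ∫ t : ℝ,
        gaussPdf t μ s2 * gammaWeight γ t μ s2 * (D ^ 2 / s2 ^ 2)
          * (γ * (t - μ) ^ 2 - s2)
      = -(D ^ 2 / s2) * (2 * Real.pi * s2) ^ (-(γ / (2 * (1 + γ))))
          * (1 + γ) ^ (-(3 : ℝ) / 2) := by
  have hpi := Real.pi_pos
  have hP : (0:ℝ) < 2 * Real.pi * s2 := by positivity
  have hg : (0:ℝ) < 1 + γ := by linarith
  set P : ℝ := 2 * Real.pi * s2 with hPdef
  set b : ℝ := (1 + γ) / (2 * s2) with hbdef
  have hb : 0 < b := by positivity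
  set K : ℝ := P ^ (γ ^ 2 / (2 * (1 + γ)) - (1 + γ) / 2) * (D ^ 2 / s2 ^ 2) with hKdef
  have hpt : ∀ t : ℝ,
      gaussPdf t μ s2 * gammaWeight γ t μ s2 * (D ^ 2 / s2 ^ 2) * (γ * (t - μ) ^ 2 - s2)
      = K * (γ * ((t - μ) ^ 2 * Real.exp (-b * (t - μ) ^ 2))
              + (-s2) * Real.exp (-b * (t - μ) ^ 2)) := by
    intro t
    have hsqrt : Real.sqrt P = P ^ ((1:ℝ)/2) := Real.sqrt_eq_rpow P
    have hinv : (Real.sqrt P)⁻¹ = P ^ (-(1:ℝ)/2) := by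
      rw [hsqrt, ← Real.rpow_neg hP.le]; norm_num
    have hexp : -(t - μ) ^ 2 / (2 * s2) * (1 + γ) = -b * (t - μ) ^ 2 := by
      rw [hbdef]; field_simp
    simp only [gaussPdf, gammaWeight, ← hPdef, hinv]
    rw [Real.mul_rpow (Real.rpow_nonneg hP.le _) (Real.exp_nonneg _),
      ← Real.rpow_mul hP.le, ← Real.exp_mul, hKdef]
    rw [show -(1:ℝ)/2 * γ = -γ/2 by ring]
    have hPcomb : P ^ (-(1:ℝ)/2) * (P ^ (-γ/2) * P ^ (γ ^ 2 / (2 * (1 + γ))))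
        = P ^ (γ ^ 2 / (2 * (1 + γ)) - (1 + γ) / 2) := by
      rw [← Real.rpow_add hP, ← Real.rpow_add hP]
      congr 1; ring
    have hecomb : Real.exp (-(t - μ) ^ 2 / (2 * s2)) * Real.exp (-(t - μ) ^ 2 / (2 * s2) * γ)
        = Real.exp (-b * (t - μ) ^ 2) := by
      rw [← Real.exp_add, ← hexp]; ring_nf
    calc P ^ (-(1:ℝ)/2) * Real.exp (-(t - μ) ^ 2 / (2 * s2)) *
          (P ^ (-γ/2) * Real.exp (-(t - μ) ^ 2 / (2 * s2) * γ) * P ^ (γ ^ 2 / (2 * (1 + γ)))) *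
          (D ^ 2 / s2 ^ 2) * (γ * (t - μ) ^ 2 - s2)
        = (P ^ (-(1:ℝ)/2) * (P ^ (-γ/2) * P ^ (γ ^ 2 / (2 * (1 + γ))))) *
          (Real.exp (-(t - μ) ^ 2 / (2 * s2)) * Real.exp (-(t - μ) ^ 2 / (2 * s2) * γ)) *
          (D ^ 2 / s2 ^ 2) * (γ * (t - μ) ^ 2 - s2) := by ring
      _ = _ := by rw [hPcomb, hecomb]; ring
  simp only [hpt]
  rw [integral_sub_right_eq_self (fun x : ℝ => K * (γ * (x ^ 2 * Real.exp (-b * x ^ 2))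
              + (-s2) * Real.exp (-b * x ^ 2))) μ]
  have hint2 : Integrable (fun x : ℝ => x ^ 2 * Real.exp (-b * x ^ 2)) := by
    have := integrable_rpow_mul_exp_neg_mul_sq hb (s := 2) (by norm_num)
    simpa [Real.rpow_natCast] using this
  have hint0 : Integrable (fun x : ℝ => Real.exp (-b * x ^ 2)) :=
    integrable_exp_neg_mul_sq hb
  rw [MeasureTheory.integral_const_mul, integral_add ((hint2.const_mul γ))
    ((hint0.const_mul (-s2))), MeasureTheory.integral_const_mul,
    MeasureTheory.integral_const_mul, integral_sq_mul_gauss hb, integral_gaussian]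
  have hsq : Real.sqrt (π / b) = P ^ ((1:ℝ)/2) * (1 + γ) ^ (-(1:ℝ)/2) := by
    have hpib : π / b = P / (1 + γ) := by
      rw [hbdef, hPdef]; field_simp
    rw [hpib, Real.sqrt_div' P hg.le, Real.sqrt_eq_rpow, Real.sqrt_eq_rpow,
      div_eq_mul_inv, ← Real.rpow_neg hg.le]
    norm_num
  have h1 : P ^ (γ ^ 2 / (2 * (1 + γ)) - (1 + γ) / 2) * P ^ ((1:ℝ)/2)
      = P ^ (-(γ / (2 * (1 + γ)))) := by
    rw [← Real.rpow_add hP]; congr 1; field_simp; ring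
  have h2 : (1 + γ) ^ (-(1:ℝ)/2) * (1 + γ)⁻¹ = (1 + γ) ^ (-(3:ℝ)/2) := by
    rw [← Real.rpow_neg_one, ← Real.rpow_add hg]; norm_num
  have hval : γ * (1 / (2 * b)) + -s2 = -s2 / (1 + γ) := by
    rw [hbdef]; field_simp; ring
  calc K * (γ * (Real.sqrt (π / b) / (2 * b)) + -s2 * Real.sqrt (π / b))
      = K * Real.sqrt (π / b) * (γ * (1 / (2 * b)) + -s2) := by ring
    _ = K * Real.sqrt (π / b) * (-s2 / (1 + γ)) := by rw [hval]
    _ = -(D ^ 2 / s2) * (P ^ (γ ^ 2 / (2 * (1 + γ)) - (1 + γ) / 2) * P ^ ((1:ℝ)/2))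
          * ((1 + γ) ^ (-(1:ℝ)/2) * (1 + γ)⁻¹) := by
        rw [hKdef, hsq]; field_simp
    _ = _ := by rw [h1, h2]
end

section
/- Let μ ∈ ℝ, A > 0 and D > 0 with 2π(A + D) > 1, and let γ > 0. Set σ² = A + D. Then for every y ∈ ℝ, the robust posterior variance strictly exceeds the standard posterior variance: D + w_γ(y; μ, σ²) · (D²/σ⁴) · {γ(y − μ)² − σ²} > A D/(A + D), where w_γ(y; μ, σ²) = φ(y; μ, σ²)^γ (2πσ²)^{γ²/(2(1+γ))}. -/
open Real

lemma gammaWeight_pos (γ y μ s2 : ℝ) (hs2 : 0 < s2) (hπ : 1 < 2 * Real.pi * s2) :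
    0 < gammaWeight γ y μ s2 := by
  unfold gammaWeight gaussPdf
  have h1 : (0:ℝ) < 2 * Real.pi * s2 := by linarith
  positivity

lemma gammaWeight_lt_one (γ y μ s2 : ℝ) (hγ : 0 < γ) (hs2 : 0 < s2)
    (hπ : 1 < 2 * Real.pi * s2) : gammaWeight γ y μ s2 < 1 := by
  set P := 2 * Real.pi * s2 with hP
  have hP0 : (0:ℝ) < P := by linarith
  have hsq : Real.sqrt P = P ^ (1/2 : ℝ) := Real.sqrt_eq_rpow P
  have hγ1 : (0:ℝ) < 1 + γ := by linarith
  have hφ : gaussPdf y μ s2 = P ^ (-(1/2) : ℝ) * Real.exp (-(y - μ) ^ 2 / (2 * s2)) := by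
    unfold gaussPdf
    rw [← hP, hsq, ← Real.rpow_neg_one, ← Real.rpow_mul hP0.le]
    norm_num
  have hexp : ∀ x : ℝ, Real.exp x ^ γ = Real.exp (x * γ) := fun x => (Real.exp_mul x γ).symm
  have hw : gammaWeight γ y μ s2
      = P ^ (-(γ / (2 * (1 + γ)))) * Real.exp ((-(y - μ) ^ 2 / (2 * s2)) * γ) := by
    unfold gammaWeight
    rw [hφ, Real.mul_rpow (by positivity) (Real.exp_nonneg _), hexp,
      ← Real.rpow_mul hP0.le, mul_assoc, mul_comm (Real.exp _), ← mul_assoc,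
      ← Real.rpow_add hP0]
    congr 2
    field_simp
    ring
  rw [hw]
  have h1 : P ^ (-(γ / (2 * (1 + γ)))) < 1 := by
    apply Real.rpow_lt_one_of_one_lt_of_neg hπ
    have : 0 < γ / (2 * (1 + γ)) := by positivity
    linarith
  have h2 : Real.exp ((-(y - μ) ^ 2 / (2 * s2)) * γ) ≤ 1 := by
    apply Real.exp_le_one_iff.mpr
    have h5 : 0 ≤ (y - μ) ^ 2 / (2 * s2) * γ := by positivity
    have h6 : -(y - μ) ^ 2 / (2 * s2) * γ = -((y - μ) ^ 2 / (2 * s2) * γ) := by ring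
    linarith [h6 ▸ neg_nonpos_of_nonneg h5]
  have h3 : (0:ℝ) < Real.exp ((-(y - μ) ^ 2 / (2 * s2)) * γ) := Real.exp_pos _
  have h4 : (0:ℝ) < P ^ (-(γ / (2 * (1 + γ)))) := Real.rpow_pos_of_pos hP0 _
  nlinarith

/-- For `γ > 0` and `2π(A+D) > 1`, the robust posterior variance strictly exceeds
the standard posterior variance `AD/(A+D)`. -/
theorem robust_variance_gt_standard (μ A D γ : ℝ) (hA : 0 < A) (hD : 0 < D)
    (h2pi : 1 < 2 * Real.pi * (A + D)) (hγ : 0 < γ) (y : ℝ) :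
    A * D / (A + D) <
      D + gammaWeight γ y μ (A + D) * (D ^ 2 / (A + D) ^ 2)
        * (γ * (y - μ) ^ 2 - (A + D)) := by
  set S := A + D with hS
  have hSpos : 0 < S := by positivity
  set w := gammaWeight γ y μ S with hw
  have hw0 : 0 < w := gammaWeight_pos γ y μ S hSpos h2pi
  have hw1 : w < 1 := gammaWeight_lt_one γ y μ S hγ hSpos h2pi
  set X := γ * (y - μ) ^ 2 - S with hX
  have key : -S < w * X := by
    rcases le_or_gt 0 X with h | h
    · nlinarith [mul_nonneg hw0.le h]
    · have ht : 0 ≤ γ * (y - μ) ^ 2 := by positivity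
      nlinarith
  have hD2 : 0 < D ^ 2 / S ^ 2 := by positivity
  have heq : A * D / S = D - (D ^ 2 / S ^ 2) * S := by
    field_simp
    ring
  rw [heq]
  nlinarith [mul_lt_mul_of_pos_left key hD2]
end

section
/- Let σ² > 0 and D ∈ ℝ. There exists a constant K > 0, depending only on σ² and D, such that for all γ ∈ [0, 1] and all y, b ∈ ℝ, | [ y − w_γ(y; b, σ²) (D/σ²)(y − b) ] − [ y − (D/σ²)(y − b) ] | ≤ K (1 + (y − b)²/σ²) (1 + |y − b|) γ, where w_γ(y; b, σ²) = φ(y; b, σ²)^γ (2πσ²)^{γ²/(2(1+γ))} (and w_0 ≡ 1). -/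
open Real

lemma aux1 (x : ℝ) (_hx : 0 ≤ x) : 1 - Real.exp (-x) ≤ x := by
  nlinarith [Real.add_one_le_exp (-x)]

lemma aux2 (t : ℝ) (_ht : 0 ≤ t) : Real.exp t - 1 ≤ t * Real.exp t := by
  have h : Real.exp (-t) * Real.exp t = 1 := by rw [← Real.exp_add]; simp
  nlinarith [Real.add_one_le_exp (-t), Real.exp_pos t]

lemma key (γ v d C : ℝ) (hγ0 : 0 ≤ γ) (hγ1 : γ ≤ 1) (hv : 0 ≤ v) (hd : |d| ≤ C) :
    |1 - Real.exp (-(γ * (v + d)))| ≤ γ * (v + C) * Real.exp C := by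
  have hC : 0 ≤ C := le_trans (abs_nonneg d) hd
  have heC : 1 ≤ Real.exp C := Real.one_le_exp hC
  have hd1 : -C ≤ d := neg_le_of_abs_le hd
  have hd2 : d ≤ C := le_of_abs_le hd
  rcases le_or_gt 0 (γ * (v + d)) with h | h
  · have h1 : Real.exp (-(γ * (v + d))) ≤ 1 := Real.exp_le_one_iff.mpr (by linarith)
    rw [abs_of_nonneg (by linarith)]
    have := aux1 (γ * (v + d)) h
    nlinarith [mul_le_mul_of_nonneg_left hd2 hγ0, mul_nonneg hγ0 (add_nonneg hv hC)]
  · -- γ*(v+d) < 0, so v + d < 0 (γ ≥ 0); then -(γ*(v+d)) = γ*(-(v+d)) ≤ γ*C ≤ ...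
    have hvd : v + d < 0 := by
      by_contra hc
      push_neg at hc
      nlinarith
    have hx : 0 ≤ -(γ * (v + d)) := by nlinarith
    have hxC : -(γ * (v + d)) ≤ γ * C := by nlinarith
    have hxC' : -(γ * (v + d)) ≤ C := by nlinarith [mul_le_of_le_one_left hC hγ1]
    have h1 : 1 ≤ Real.exp (-(γ * (v + d))) := Real.one_le_exp hx
    rw [abs_of_nonpos (by linarith)]
    have h2 := aux2 (-(γ * (v + d))) hx
    have h3 : Real.exp (-(γ * (v + d))) ≤ Real.exp C := Real.exp_le_exp.mpr hxC'
    nlinarith [mul_le_mul hxC h3 (Real.exp_pos _).le (mul_nonneg hγ0 hC),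
      mul_nonneg (mul_nonneg hγ0 hv) (Real.exp_pos C).le]

/-- Bound (S9): the robust posterior mean deviates from the standard posterior mean
at most linearly in `γ`. -/
theorem robust_mean_deviation_bound (s2 D : ℝ) (hs2 : 0 < s2) :
    ∃ K > 0, ∀ γ ∈ Set.Icc (0 : ℝ) 1, ∀ y b : ℝ,
      |(y - gammaWeight γ y b s2 * (D / s2) * (y - b)) - (y - D / s2 * (y - b))|
        ≤ K * (1 + (y - b) ^ 2 / s2) * (1 + |y - b|) * γ := by
  set L := Real.log (2 * Real.pi * s2) with hL
  set C := |L| / 2 with hCdef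
  refine ⟨(1 + |D| / s2) * (1 + C) * Real.exp C, by positivity, ?_⟩
  rintro γ ⟨hγ0, hγ1⟩ y b
  set t := y - b with ht
  have hπ : 0 < 2 * Real.pi * s2 := by positivity
  have hγ' : (0:ℝ) < 1 + γ := by linarith
  -- rewrite the weight as an exponential
  have hφ : 0 < gaussPdf y b s2 := by
    unfold gaussPdf; positivity
  have hlogφ : Real.log (gaussPdf y b s2) = -L/2 + -t^2/(2*s2) := by
    unfold gaussPdf
    rw [Real.log_mul (by positivity) (Real.exp_ne_zero _), Real.log_inv,
      Real.log_sqrt hπ.le, Real.log_exp]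
    ring
  have hw : gammaWeight γ y b s2
      = Real.exp (-(γ * (t^2/(2*s2) + L/(2*(1+γ))))) := by
    unfold gammaWeight
    rw [Real.rpow_def_of_pos hφ, Real.rpow_def_of_pos hπ, ← Real.exp_add, hlogφ, ← hL]
    congr 1
    field_simp
    ring
  have hdC : |L/(2*(1+γ))| ≤ C := by
    rw [abs_div, abs_of_pos (by linarith : (0:ℝ) < 2*(1+γ))]
    rw [hCdef, div_le_div_iff₀ (by linarith) (by norm_num)]
    nlinarith [abs_nonneg L]
  have hv : (0:ℝ) ≤ t^2/(2*s2) := by positivity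
  have hkey := key γ (t^2/(2*s2)) (L/(2*(1+γ))) C hγ0 hγ1 hv hdC
  rw [← hw] at hkey
  have hC : 0 ≤ C := by positivity
  have heC : 1 ≤ Real.exp C := Real.one_le_exp hC
  have hexpr : (y - gammaWeight γ y b s2 * (D / s2) * (y - b)) - (y - D / s2 * (y - b))
      = (1 - gammaWeight γ y b s2) * (D / s2) * t := by ring
  rw [hexpr, abs_mul, abs_mul]
  have h1 : |1 - gammaWeight γ y b s2| * |D / s2| * |t|
      ≤ (γ * (t^2/(2*s2) + C) * Real.exp C) * (|D|/s2) * |t| := by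
    have hD : |D / s2| = |D| / s2 := by
      rw [abs_div, abs_of_pos hs2]
    rw [hD]
    apply mul_le_mul_of_nonneg_right _ (abs_nonneg t)
    apply mul_le_mul_of_nonneg_right hkey (by positivity)
  refine h1.trans ?_
  have hts : 0 ≤ t^2/s2 := by positivity
  have h2 : t^2/(2*s2) + C ≤ (1 + C) * (1 + t^2/s2) := by
    have : t^2/(2*s2) ≤ t^2/s2 := by
      apply div_le_div_of_nonneg_left (by positivity) hs2 <;> linarith
    nlinarith
  calc (γ * (t^2/(2*s2) + C) * Real.exp C) * (|D|/s2) * |t|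
      ≤ (γ * ((1+C)*(1+t^2/s2)) * Real.exp C) * (1+|D|/s2) * (1+|t|) := by
        gcongr <;> first
          | positivity
          | linarith [abs_nonneg t]
    _ = (1 + |D|/s2) * (1+C) * Real.exp C * (1 + t^2/s2) * (1+|t|) * γ := by ring
end

section
/- Let σ² > 0 and D ∈ ℝ. There exists a constant K > 0, depending only on σ² and D, such that for all γ ∈ [0, 1] and all y, b ∈ ℝ, | [ D + w_γ(y; b, σ²) (D²/σ⁴){γ(y − b)² − σ²} ] − [ D − D²/σ² ] | ≤ K (1 + (y − b)²/σ²) (1 + (y − b)²) γ, where w_γ(y; b, σ²) = φ(y; b, σ²)^γ (2πσ²)^{γ²/(2(1+γ))} (and w_0 ≡ 1). -/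
open Real

set_option maxHeartbeats 1000000 in
/-- Bound (S10): the robust posterior variance deviates from the standard posterior
variance `D − D²/σ²` at most linearly in `γ`. -/
theorem robust_variance_deviation_bound (s2 D : ℝ) (hs2 : 0 < s2) :
    ∃ K > 0, ∀ γ ∈ Set.Icc (0 : ℝ) 1, ∀ y b : ℝ,
      |(D + gammaWeight γ y b s2 * (D ^ 2 / s2 ^ 2) * (γ * (y - b) ^ 2 - s2))
          - (D - D ^ 2 / s2)|
        ≤ K * (1 + (y - b) ^ 2 / s2) * (1 + (y - b) ^ 2) * γ := by
  have hL0 : (0:ℝ) ≤ |Real.log (2 * Real.pi * s2)| := abs_nonneg _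
  set L := Real.log (2 * Real.pi * s2) with hLdef
  set M := Real.exp (|L| / 2) with hMdef
  have hM1 : (1:ℝ) ≤ M := Real.one_le_exp (by positivity)
  have hM0 : (0:ℝ) < M := Real.exp_pos _
  set C := D ^ 2 / s2 ^ 2 * M with hCdef
  have hC0 : 0 ≤ C := by positivity
  refine ⟨C * (3/2 + s2 * |L| / 2) + 1, by positivity, ?_⟩
  rintro γ ⟨hγ0, hγ1⟩ y b
  set t := (y - b) ^ 2 with htdef
  have ht0 : (0:ℝ) ≤ t := sq_nonneg _
  have h2pis2 : (0:ℝ) < 2 * Real.pi * s2 := by positivity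
  have h1γ : (0:ℝ) < 1 + γ := by linarith
  -- the weight as an exponential
  have hsqrt : Real.sqrt (2 * Real.pi * s2) = Real.exp (L / 2) := by
    rw [show 2 * Real.pi * s2 = Real.exp (L / 2) ^ 2 by
      rw [sq, ← Real.exp_add]; rw [show L / 2 + L / 2 = L by ring, hLdef,
        Real.exp_log h2pis2]]
    exact Real.sqrt_sq (Real.exp_pos _).le
  set E : ℝ := -(γ * t / (2 * s2)) - L * γ / (2 * (1 + γ)) with hEdef
  have hw : gammaWeight γ y b s2 = Real.exp E := by
    rw [gammaWeight, gaussPdf, hsqrt, ← Real.exp_neg, ← Real.exp_add,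
      ← Real.rpow_natCast (y - b) 2]
    rw [Real.rpow_def_of_pos (Real.exp_pos _), Real.log_exp,
      Real.rpow_def_of_pos h2pis2, ← hLdef, ← Real.exp_add]
    congr 1
    rw [hEdef]
    push_cast
    rw [Real.rpow_two]
    rw [htdef]
    field_simp
    ring
  set w := Real.exp E with hwdef
  have hw0 : (0:ℝ) < w := Real.exp_pos _
  -- E ≤ |L|/2, hence w ≤ M
  have hE1 : E ≤ |L| / 2 := by
    have h1 : -(γ * t / (2 * s2)) ≤ 0 := by
      have : 0 ≤ γ * t / (2 * s2) := by positivity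
      linarith
    have h2 : -(L * γ / (2 * (1 + γ))) ≤ |L| / 2 := by
      rw [neg_le, ← neg_div]
      rw [div_le_div_iff₀ (by linarith) (by positivity)]
      have hnL : -|L| ≤ L := neg_abs_le L
      nlinarith [mul_nonneg hL0 hγ0]
    rw [hEdef]; linarith
  have hwM : w ≤ M := by
    rw [hwdef, hMdef]; exact Real.exp_le_exp.mpr hE1
  -- |E| ≤ γ * (t/(2 s2) + |L|/2)
  have hE2 : |E| ≤ γ * (t / (2 * s2) + |L| / 2) := by
    have h1 : |(-(γ * t / (2 * s2)))| = γ * t / (2 * s2) := by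
      rw [abs_neg, abs_of_nonneg (by positivity)]
    have h2 : |L * γ / (2 * (1 + γ))| ≤ γ * |L| / 2 := by
      rw [abs_div, abs_mul, abs_of_pos (show (0:ℝ) < 2 * (1 + γ) by positivity)]
      rw [abs_of_nonneg hγ0, div_le_div_iff₀ (by positivity) two_pos]
      nlinarith [mul_nonneg (mul_nonneg hL0 hγ0) hγ0]
    calc |E| ≤ |(-(γ * t / (2 * s2)))| + |L * γ / (2 * (1 + γ))| := by
          rw [hEdef]; exact abs_sub _ _
      _ ≤ γ * t / (2 * s2) + γ * |L| / 2 := by rw [h1]; linarith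
      _ = γ * (t / (2 * s2) + |L| / 2) := by ring
  -- |w - 1| ≤ |E| * M
  have hw1 : |w - 1| ≤ |E| * M := by
    rcases le_or_gt E 0 with hE | hE
    · have hwle1 : w ≤ 1 := Real.exp_le_one_iff.mpr hE
      have h := Real.add_one_le_exp E
      have : |w - 1| = 1 - w := by rw [abs_of_nonpos (by linarith)]; ring
      rw [this]
      have hEabs : |E| = -E := abs_of_nonpos hE
      nlinarith
    · have hwge1 : 1 ≤ w := Real.one_le_exp hE.le
      have h := Real.add_one_le_exp (-E)
      rw [Real.exp_neg, ← hwdef] at h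
      have hinv : w⁻¹ = 1 / w := by rw [one_div]
      have hkey : w - 1 ≤ E * w := by
        have h' : (-E + 1) * w ≤ 1 := by
          calc (-E + 1) * w ≤ w⁻¹ * w := by
                apply mul_le_mul_of_nonneg_right h hw0.le
            _ = 1 := inv_mul_cancel₀ hw0.ne'
        nlinarith
      have hEabs : |E| = E := abs_of_pos hE
      rw [abs_of_nonneg (by linarith), hEabs]
      calc w - 1 ≤ E * w := hkey
        _ ≤ E * M := mul_le_mul_of_nonneg_left hwM hE.le
  clear_value w E M C L t
  -- rewrite the deviation
  have hrw : (D + w * (D ^ 2 / s2 ^ 2) * (γ * t - s2)) - (D - D ^ 2 / s2)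
      = D ^ 2 / s2 ^ 2 * (w * γ * t - s2 * (w - 1)) := by
    field_simp
    ring
  rw [hw, hrw, abs_mul, abs_of_nonneg (by positivity : (0:ℝ) ≤ D ^ 2 / s2 ^ 2)]
  -- bound the inner term
  have hinner : |w * γ * t - s2 * (w - 1)| ≤ γ * M * (3 * t / 2 + s2 * |L| / 2) := by
    calc |w * γ * t - s2 * (w - 1)| ≤ |w * γ * t| + |s2 * (w - 1)| := abs_sub _ _
      _ = w * γ * t + s2 * |w - 1| := by
          rw [abs_of_nonneg (mul_nonneg (mul_nonneg hw0.le hγ0) ht0), abs_mul,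
            abs_of_pos hs2]
      _ ≤ M * γ * t + s2 * (|E| * M) := by
          have h1 : w * γ * t ≤ M * γ * t := by
            apply mul_le_mul_of_nonneg_right (mul_le_mul_of_nonneg_right hwM hγ0) ht0
          have h2 : s2 * |w - 1| ≤ s2 * (|E| * M) :=
            mul_le_mul_of_nonneg_left hw1 hs2.le
          linarith
      _ ≤ M * γ * t + s2 * (γ * (t / (2 * s2) + |L| / 2) * M) := by
          have : |E| * M ≤ γ * (t / (2 * s2) + |L| / 2) * M :=
            mul_le_mul_of_nonneg_right hE2 hM0.le
          have h2 := mul_le_mul_of_nonneg_left this hs2.le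
          linarith
      _ = γ * M * (3 * t / 2 + s2 * |L| / 2) := by
          field_simp
          ring
  calc D ^ 2 / s2 ^ 2 * |w * γ * t - s2 * (w - 1)|
      ≤ D ^ 2 / s2 ^ 2 * (γ * M * (3 * t / 2 + s2 * |L| / 2)) := by
        apply mul_le_mul_of_nonneg_left hinner (by positivity)
    _ ≤ (C * (3/2 + s2 * |L| / 2) + 1) * (1 + t / s2) * (1 + t) * γ := by
        have hu0 : (0:ℝ) ≤ t / s2 := div_nonneg ht0 hs2.le
        have hA0 : (0:ℝ) ≤ s2 * |L| / 2 := by positivity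
        have hbracket : C * (3 * t / 2 + s2 * |L| / 2)
            ≤ (C * (3/2 + s2 * |L| / 2) + 1) * (1 + t / s2) * (1 + t) := by
          nlinarith [mul_nonneg hC0 ht0, mul_nonneg (mul_nonneg hC0 hA0) ht0,
            mul_nonneg hu0 ht0, mul_nonneg (mul_nonneg hC0 hu0) ht0,
            mul_nonneg (mul_nonneg (mul_nonneg hC0 hA0) hu0) ht0,
            mul_nonneg (mul_nonneg hC0 hA0) hu0,
            mul_nonneg hC0 hu0]
        calc D ^ 2 / s2 ^ 2 * (γ * M * (3 * t / 2 + s2 * |L| / 2))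
            = (C * (3 * t / 2 + s2 * |L| / 2)) * γ := by rw [hCdef]; ring
          _ ≤ ((C * (3/2 + s2 * |L| / 2) + 1) * (1 + t / s2) * (1 + t)) * γ :=
              mul_le_mul_of_nonneg_right hbracket hγ0
end
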